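/- arXiv:1906.05744 — 2 statements merged into one kernel-verified Lean document; each statement's English description precedes it below -/
import Mathlib

section
/- Let T be a simplicial tree, G ≤ Aut(T), and let g₁, g₂, g₃ ∈ G be supported in pairwise disjoint half-trees. Then for every g ∈ G at least one of the following holds: (1) [g₁^g, g₁] = 1 or [g₂^g, g₂] = 1 or [g₃^g, g₃] = 1; (2) [g_i^g, g_j] = 1 for all i ≠ j in {1,2,3}. In particular, for every g ∈ G there exist i, j ∈ {1,2,3} with [g_i^g, g_j] = 1. -/
open Set

universe v

variable {V : Type v}

/-- A permutation of the vertex set is an automorphism of the graph `T`. -/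
def IsAut (T : SimpleGraph V) (g : Equiv.Perm V) : Prop :=
  ∀ u v : V, T.Adj (g u) (g v) ↔ T.Adj u v

/-- The half-tree determined by an (oriented) edge `(u, v)`: the set of vertices whose
geodesic to `u` passes through `v`. -/
def halfTree (T : SimpleGraph V) (u v : V) : Set V :=
  {w : V | ∀ p : T.Walk w u, v ∈ p.support}

/-- A half-tree of `T`. -/
def IsHalfTree (T : SimpleGraph V) (A : Set V) : Prop :=
  ∃ u v : V, T.Adj u v ∧ A = halfTree T u v

/-- A permutation is supported in a set of vertices `A` if it fixes the complement of `A`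
pointwise. -/
def SupportedIn (g : Equiv.Perm V) (A : Set V) : Prop :=
  ∀ w : V, w ∉ A → g w = w

section Aux

variable {T : SimpleGraph V}

lemma mem_halfTree_iff {u v w : V} :
    w ∈ halfTree T u v ↔ ∀ p : T.Walk w u, v ∈ p.support := Iff.rfl

lemma not_mem_halfTree {u v w : V} (h : w ∉ halfTree T u v) :
    ∃ p : T.Walk w u, v ∉ p.support := by
  simpa only [halfTree, Set.mem_setOf_eq, not_forall] using h

/-- "Star" lemma: if `c` lies in the half-tree of `(a,b)` and `b` lies in the half-tree
of `(c,d)`, the two half-trees cover everything. -/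
lemma halfTree_union_of_cross {a b c d : V} (hc : c ∈ halfTree T a b)
    (hb : b ∈ halfTree T c d) (y : V) :
    y ∈ halfTree T a b ∨ y ∈ halfTree T c d := by
  classical
  by_contra hy
  push_neg at hy
  obtain ⟨Q, hQ⟩ := not_mem_halfTree hy.1
  obtain ⟨W, hW⟩ := not_mem_halfTree hy.2
  have hbW : b ∈ W.support := by
    by_contra hbW
    have := hc (W.reverse.append Q)
    rw [SimpleGraph.Walk.mem_support_append_iff] at this
    rcases this with h | h
    · exact hbW (by simpa [SimpleGraph.Walk.support_reverse] using h)
    · exact hQ h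
  exact hW (SimpleGraph.Walk.support_dropUntil_subset W hbW (hb (W.dropUntil b hbW)))

/-- Complement of a half-tree along an edge of a tree is the reversed half-tree. -/
lemma not_mem_halfTree_iff (hT : T.IsTree) {a b : V} (hab : T.Adj a b) (w : V) :
    w ∉ halfTree T a b ↔ w ∈ halfTree T b a := by
  classical
  constructor
  · intro hw
    obtain ⟨p, hp⟩ := not_mem_halfTree hw
    intro q
    by_contra ha
    have hP : b ∉ p.bypass.support := fun h => hp (p.support_bypass_subset h)
    have hQ : a ∉ q.bypass.support := fun h => ha (q.support_bypass_subset h)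
    have hpath2 : (SimpleGraph.Walk.cons hab q.bypass.reverse).IsPath :=
      (q.bypass_isPath.reverse).cons
        (by simpa [SimpleGraph.Walk.support_reverse] using hQ)
    have heq := hT.IsAcyclic.path_unique
      ⟨p.bypass.reverse, p.bypass_isPath.reverse⟩
      ⟨SimpleGraph.Walk.cons hab q.bypass.reverse, hpath2⟩
    have heq' : p.bypass.reverse = SimpleGraph.Walk.cons hab q.bypass.reverse :=
      congrArg Subtype.val heq
    have hb2 : b ∈ p.bypass.reverse.support := by
      rw [heq']
      simp only [SimpleGraph.Walk.support_cons, List.mem_cons]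
      exact Or.inr (SimpleGraph.Walk.start_mem_support _)
    rw [SimpleGraph.Walk.support_reverse, List.mem_reverse] at hb2
    exact hP hb2
  · intro hw hA
    obtain ⟨p0⟩ := hT.isConnected.preconnected w a
    set P := p0.bypass with hPdef
    have hb : b ∈ P.support := hA P
    have ha : a ∈ (P.takeUntil b hb).support := hw (P.takeUntil b hb)
    have hnd : ((P.takeUntil b hb).append (P.dropUntil b hb)).support.Nodup := by
      rw [SimpleGraph.Walk.take_spec]
      exact ((SimpleGraph.Walk.isPath_def _).mp p0.bypass_isPath)
    rw [SimpleGraph.Walk.support_append, List.nodup_append] at hnd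
    have ha2 : a ∈ (P.dropUntil b hb).support.tail := by
      have hend : a ∈ (P.dropUntil b hb).support := SimpleGraph.Walk.end_mem_support _
      rw [SimpleGraph.Walk.support_eq_cons, List.mem_cons] at hend
      rcases hend with h | h
      · exact absurd h hab.ne
      · exact h
    exact hnd.2.2 a ha a ha2 rfl

/-- Quadrant lemma: for two half-trees in a tree, one of the four "quadrants" is empty. -/
lemma halfTree_quadrant (hT : T.IsTree) {a b c d : V} (hab : T.Adj a b) (hcd : T.Adj c d) :
    (∀ w, ¬(w ∈ halfTree T a b ∧ w ∈ halfTree T c d)) ∨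
    (halfTree T a b ⊆ halfTree T c d) ∨
    (halfTree T c d ⊆ halfTree T a b) ∨
    (∀ w, w ∈ halfTree T a b ∨ w ∈ halfTree T c d) := by
  by_cases hcA : c ∈ halfTree T a b
  · by_cases hbB : b ∈ halfTree T c d
    · exact Or.inr <| Or.inr <| Or.inr <| halfTree_union_of_cross hcA hbB
    · have hbB' : b ∈ halfTree T d c := (not_mem_halfTree_iff hT hcd b).mp hbB
      by_cases hdA : d ∈ halfTree T a b
      · refine Or.inr <| Or.inr <| Or.inl ?_
        intro w hwB
        rcases halfTree_union_of_cross hdA hbB' w with h | h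
        · exact h
        · exact absurd hwB (fun h' => ((not_mem_halfTree_iff hT hcd w).mpr h) h')
      · -- degenerate: b = c and a = d, so the half-trees are complementary
        obtain ⟨P, hP⟩ := not_mem_halfTree hdA
        have hbc : b = c := by
          have := hcA (SimpleGraph.Walk.cons hcd P)
          simp only [SimpleGraph.Walk.support_cons, List.mem_cons] at this
          rcases this with h | h
          · exact h
          · exact absurd h hP
        have hcA' : c ∉ halfTree T b a :=
          fun h => ((not_mem_halfTree_iff hT hab c).mpr h) hcA
        obtain ⟨Q, hQ⟩ := not_mem_halfTree hcA'
        have hdA' : d ∈ halfTree T b a := (not_mem_halfTree_iff hT hab d).mp hdA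
        have had : a = d := by
          have := hdA' (SimpleGraph.Walk.cons hcd.symm Q)
          simp only [SimpleGraph.Walk.support_cons, List.mem_cons] at this
          rcases this with h | h
          · exact h
          · exact absurd h hQ
        refine Or.inl fun w hw => ?_
        have h2 : w ∈ halfTree T b a := by rw [hbc, had]; exact hw.2
        exact ((not_mem_halfTree_iff hT hab w).mpr h2) hw.1
  · have hcA' : c ∈ halfTree T b a := (not_mem_halfTree_iff hT hab c).mp hcA
    by_cases haB : a ∈ halfTree T c d
    · refine Or.inr <| Or.inl ?_
      intro w hwA
      rcases halfTree_union_of_cross hcA' haB w with h | h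
      · exact absurd hwA (fun h' => ((not_mem_halfTree_iff hT hab w).mpr h) h')
      · exact h
    · have haB' : a ∈ halfTree T d c := (not_mem_halfTree_iff hT hcd a).mp haB
      by_cases hdA : d ∈ halfTree T a b
      · -- degenerate: b = d and a = c, so the half-trees are equal
        obtain ⟨P, hP⟩ := not_mem_halfTree hcA
        have hbd : b = d := by
          have := hdA (SimpleGraph.Walk.cons hcd.symm P)
          simp only [SimpleGraph.Walk.support_cons, List.mem_cons] at this
          rcases this with h | h
          · exact h
          · exact absurd h hP
        have hdA'' : d ∉ halfTree T b a :=
          fun h => ((not_mem_halfTree_iff hT hab d).mpr h) hdA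
        obtain ⟨Q, hQ⟩ := not_mem_halfTree hdA''
        have hac : a = c := by
          have := hcA' (SimpleGraph.Walk.cons hcd Q)
          simp only [SimpleGraph.Walk.support_cons, List.mem_cons] at this
          rcases this with h | h
          · exact h
          · exact absurd h hQ
        refine Or.inr <| Or.inr <| Or.inl ?_
        intro w hw
        rwa [← hac, ← hbd] at hw
      · have hdA' : d ∈ halfTree T b a := (not_mem_halfTree_iff hT hab d).mp hdA
        refine Or.inl fun w hw => ?_
        rcases halfTree_union_of_cross hdA' haB' w with h | h
        · exact ((not_mem_halfTree_iff hT hab w).mpr h) hw.1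
        · exact ((not_mem_halfTree_iff hT hcd w).mpr h) hw.2

lemma isAut_inv {g : Equiv.Perm V} (h : IsAut T g) : IsAut T g⁻¹ := by
  intro u v
  simpa using (h (g⁻¹ u) (g⁻¹ v)).symm

/-- The graph homomorphism associated to an automorphism. -/
def autHom (T : SimpleGraph V) (g : Equiv.Perm V) (h : IsAut T g) : T →g T :=
  ⟨g, fun {u v} huv => (h u v).mpr huv⟩

@[simp] lemma autHom_apply (T : SimpleGraph V) (g : Equiv.Perm V) (h : IsAut T g) (x : V) :
    autHom T g h x = g x := rfl

lemma image_halfTree {g : Equiv.Perm V} (hg : IsAut T g) (u v : V) :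
    (g : V → V) '' halfTree T u v = halfTree T (g u) (g v) := by
  ext w
  constructor
  · rintro ⟨x, hx, rfl⟩
    intro p
    have hv := hx ((p.map (autHom T g⁻¹ (isAut_inv hg))).copy (by simp) (by simp))
    rw [SimpleGraph.Walk.support_copy, SimpleGraph.Walk.support_map] at hv
    obtain ⟨y, hy, hyv⟩ := List.mem_map.mp hv
    have : y = g v := by
      simp only [autHom_apply] at hyv
      have := congrArg g hyv
      simpa using this
    rwa [← this]
  · intro hw
    refine ⟨g⁻¹ w, ?_, by simp⟩
    intro p
    have hv := hw ((p.map (autHom T g hg)).copy (by simp) (autHom_apply T g hg u))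
    rw [SimpleGraph.Walk.support_copy, SimpleGraph.Walk.support_map] at hv
    obtain ⟨y, hy, hyv⟩ := List.mem_map.mp hv
    simp only [autHom_apply] at hyv
    rwa [← g.injective hyv]

lemma supportedIn_conj {g h : Equiv.Perm V} {A : Set V} (hs : SupportedIn h A) :
    SupportedIn (g * h * g⁻¹) ((g : V → V) '' A) := by
  intro w hw
  have hmem : g⁻¹ w ∉ A := fun hmem => hw ⟨g⁻¹ w, hmem, by simp⟩
  rw [Equiv.Perm.mul_apply, Equiv.Perm.mul_apply, hs _ hmem]
  simp

lemma commute_of_disjoint_support {g h : Equiv.Perm V} {A B : Set V}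
    (hg : SupportedIn g A) (hh : SupportedIn h B) (hAB : Disjoint A B) : Commute g h := by
  apply Equiv.Perm.Disjoint.commute
  intro x
  by_cases hx : x ∈ A
  · exact Or.inr (hh x (Set.disjoint_left.mp hAB hx))
  · exact Or.inl (hg x hx)

lemma key_step (hT : T.IsTree) {g : Equiv.Perm V} (hg : IsAut T g)
    {Ai Aj Ak : Set V} (hi : IsHalfTree T Ai) (hj : IsHalfTree T Aj)
    (hij : Disjoint Ai Aj) (hik : Disjoint Ai Ak) (hjk : Disjoint Aj Ak)
    (hnd : ¬ Disjoint ((g : V → V) '' Ai) Aj) :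
    Disjoint ((g : V → V) '' Ai) Ai ∨ Disjoint ((g : V → V) '' Aj) Aj ∨
      Disjoint ((g : V → V) '' Ak) Ak := by
  obtain ⟨u, v, huv, rfl⟩ := hi
  obtain ⟨c, d, hcd, rfl⟩ := hj
  have hguv : T.Adj (g u) (g v) := (hg u v).mpr huv
  rcases halfTree_quadrant hT hguv hcd with h | h | h | h
  · refine absurd ?_ hnd
    rw [image_halfTree hg]
    exact Set.disjoint_left.mpr fun x hx hx' => h x ⟨hx, hx'⟩
  · left
    rw [image_halfTree hg]
    exact Set.disjoint_left.mpr fun x hx =>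
      Set.disjoint_left.mp hij.symm (h hx)
  · right; left
    have himg : Disjoint ((g : V → V) '' halfTree T u v) ((g : V → V) '' halfTree T c d) :=
      (Set.disjoint_image_iff g.injective).mpr hij
    exact Set.disjoint_left.mpr fun x hx hx' =>
      Set.disjoint_left.mp himg.symm hx (by rw [image_halfTree hg]; exact h hx')
  · right; right
    have himg : Disjoint ((g : V → V) '' halfTree T u v) ((g : V → V) '' Ak) :=
      (Set.disjoint_image_iff g.injective).mpr hik
    refine Set.disjoint_left.mpr fun x hx hx' => ?_
    rcases h x with hmem | hmem
    · exact Set.disjoint_left.mp himg.symm hx (by rw [image_halfTree hg]; exact hmem)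
    · exact Set.disjoint_left.mp hjk.symm hx' hmem

end Aux

/-- **(Le Boudec--Matte Bon, Lemma 3.6.)** Let `T` be a tree, `G ≤ Aut(T)` and let
`g₁, g₂, g₃ ∈ G` be supported in pairwise disjoint half-trees. Then for every `g ∈ G` at
least one of the following holds:
(1) `[g₁^g, g₁] = 1` or `[g₂^g, g₂] = 1` or `[g₃^g, g₃] = 1`;
(2) `[gᵢ^g, gⱼ] = 1` for all `i ≠ j`.
In particular there are `i, j` with `[gᵢ^g, gⱼ] = 1`. -/
theorem tree_disjoint_halfTrees_commutation
    (T : SimpleGraph V) (hT : T.IsTree)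
    (G : Subgroup (Equiv.Perm V))
    (hAut : ∀ g ∈ G, IsAut T g)
    (A₁ A₂ A₃ : Set V)
    (h₁ : IsHalfTree T A₁) (h₂ : IsHalfTree T A₂) (h₃ : IsHalfTree T A₃)
    (hd₁₂ : Disjoint A₁ A₂) (hd₁₃ : Disjoint A₁ A₃) (hd₂₃ : Disjoint A₂ A₃)
    (g₁ g₂ g₃ : Equiv.Perm V)
    (hg₁ : g₁ ∈ G) (hg₂ : g₂ ∈ G) (hg₃ : g₃ ∈ G)
    (hs₁ : SupportedIn g₁ A₁) (hs₂ : SupportedIn g₂ A₂) (hs₃ : SupportedIn g₃ A₃) :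
    ∀ g ∈ G,
      ((Commute (g * g₁ * g⁻¹) g₁ ∨ Commute (g * g₂ * g⁻¹) g₂ ∨ Commute (g * g₃ * g⁻¹) g₃) ∨
        (∀ i j : Fin 3, i ≠ j →
          Commute (g * (![g₁, g₂, g₃] i) * g⁻¹) (![g₁, g₂, g₃] j))) ∧
      ∃ i j : Fin 3, Commute (g * (![g₁, g₂, g₃] i) * g⁻¹) (![g₁, g₂, g₃] j) := by
  intro g hg
  have hga : IsAut T g := hAut g hg
  have mk : ∀ {h k : Equiv.Perm V} {A B : Set V}, SupportedIn h A → SupportedIn k B →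
      Disjoint ((g : V → V) '' A) B → Commute (g * h * g⁻¹) k :=
    fun hsA hsB hd => commute_of_disjoint_support (supportedIn_conj hsA) hsB hd
  have main : (Disjoint ((g : V → V) '' A₁) A₁ ∨ Disjoint ((g : V → V) '' A₂) A₂ ∨
      Disjoint ((g : V → V) '' A₃) A₃) ∨
      (Disjoint ((g : V → V) '' A₁) A₂ ∧ Disjoint ((g : V → V) '' A₁) A₃ ∧
       Disjoint ((g : V → V) '' A₂) A₁ ∧ Disjoint ((g : V → V) '' A₂) A₃ ∧
       Disjoint ((g : V → V) '' A₃) A₁ ∧ Disjoint ((g : V → V) '' A₃) A₂) := by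
    by_cases h12 : Disjoint ((g : V → V) '' A₁) A₂
    · by_cases h13 : Disjoint ((g : V → V) '' A₁) A₃
      · by_cases h21 : Disjoint ((g : V → V) '' A₂) A₁
        · by_cases h23 : Disjoint ((g : V → V) '' A₂) A₃
          · by_cases h31 : Disjoint ((g : V → V) '' A₃) A₁
            · by_cases h32 : Disjoint ((g : V → V) '' A₃) A₂
              · exact Or.inr ⟨h12, h13, h21, h23, h31, h32⟩
              · left
                rcases key_step hT hga h₃ h₂ hd₂₃.symm hd₁₃.symm hd₁₂.symm h32 with h | h | h
                · exact Or.inr (Or.inr h)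
                · exact Or.inr (Or.inl h)
                · exact Or.inl h
            · left
              rcases key_step hT hga h₃ h₁ hd₁₃.symm hd₂₃.symm hd₁₂ h31 with h | h | h
              · exact Or.inr (Or.inr h)
              · exact Or.inl h
              · exact Or.inr (Or.inl h)
          · left
            rcases key_step hT hga h₂ h₃ hd₂₃ hd₁₂.symm hd₁₃.symm h23 with h | h | h
            · exact Or.inr (Or.inl h)
            · exact Or.inr (Or.inr h)
            · exact Or.inl h
        · left
          rcases key_step hT hga h₂ h₁ hd₁₂.symm hd₂₃ hd₁₃ h21 with h | h | h
          · exact Or.inr (Or.inl h)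
          · exact Or.inl h
          · exact Or.inr (Or.inr h)
      · left
        rcases key_step hT hga h₁ h₃ hd₁₃ hd₁₂ hd₂₃.symm h13 with h | h | h
        · exact Or.inl h
        · exact Or.inr (Or.inr h)
        · exact Or.inr (Or.inl h)
    · left
      rcases key_step hT hga h₁ h₂ hd₁₂ hd₁₃ hd₂₃ h12 with h | h | h
      · exact Or.inl h
      · exact Or.inr (Or.inl h)
      · exact Or.inr (Or.inr h)
  have e0 : ![g₁, g₂, g₃] (0 : Fin 3) = g₁ := rfl
  have e1 : ![g₁, g₂, g₃] (1 : Fin 3) = g₂ := rfl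
  have e2 : ![g₁, g₂, g₃] (2 : Fin 3) = g₃ := rfl
  rcases main with h | ⟨d12, d13, d21, d23, d31, d32⟩
  · rcases h with h | h | h
    · exact ⟨Or.inl (Or.inl (mk hs₁ hs₁ h)), 0, 0, by rw [e0]; exact mk hs₁ hs₁ h⟩
    · exact ⟨Or.inl (Or.inr (Or.inl (mk hs₂ hs₂ h))), 1, 1, by rw [e1]; exact mk hs₂ hs₂ h⟩
    · exact ⟨Or.inl (Or.inr (Or.inr (mk hs₃ hs₃ h))), 2, 2, by rw [e2]; exact mk hs₃ hs₃ h⟩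
  · refine ⟨Or.inr ?_, 0, 1, by rw [e0, e1]; exact mk hs₁ hs₂ d12⟩
    intro i j hij
    fin_cases i <;> fin_cases j <;> simp only [e0, e1, e2] <;>
      first
        | exact absurd rfl hij
        | exact mk hs₁ hs₂ d12
        | exact mk hs₁ hs₃ d13
        | exact mk hs₂ hs₁ d21
        | exact mk hs₂ hs₃ d23
        | exact mk hs₃ hs₁ d31
        | exact mk hs₃ hs₂ d32
end

section
/- Let G ≤ Homeo⁺(ℝ) be a group of orientation-preserving homeomorphisms of the real line acting on ℝ with no global fixed point, and suppose the subgroup G⁰ of compactly supported elements of G is non-trivial. Then the transitivity degree of G is at most 2. -/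
open Set

universe u

theorem Equiv.Perm.apply_inv_self {α : Type*} (e : Equiv.Perm α) (x : α) : e (e⁻¹ x) = x :=
  e.apply_symm_apply x

theorem Equiv.Perm.inv_apply_self {α : Type*} (e : Equiv.Perm α) (x : α) : e⁻¹ (e x) = x :=
  e.symm_apply_apply x

/-- An action of `G` on `Ω` (given by `ρ : G →* Equiv.Perm Ω`) is `k`-transitive if it is
transitive on ordered `k`-tuples of pairwise distinct elements of `Ω`. -/
def IsKTransitive {G : Type*} [Group G] {Ω : Type*} (ρ : G →* Equiv.Perm Ω) (k : ℕ) : Prop :=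
  ∀ x y : Fin k ↪ Ω, ∃ g : G, ∀ i : Fin k, ρ g (x i) = y i


/-- A permutation that fixes everything outside `s` maps `s` into itself. -/
lemma map_mem_of_out (p : Equiv.Perm ℝ) {s : Set ℝ} (hout : ∀ x ∉ s, p x = x)
    {x : ℝ} (hx : x ∈ s) : p x ∈ s := by
  by_contra hpx
  have h2 : p (p x) = p x := hout _ hpx
  have h3 : p x = x := p.injective h2
  exact hpx (by rwa [h3])

/-- Permutations with separated supports commute (pointwise). -/
lemma commute_of_sep (p q : Equiv.Perm ℝ) {s t : Set ℝ}
    (hp : ∀ x ∉ s, p x = x) (hq : ∀ x ∉ t, q x = x)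
    (hst : ∀ x, x ∈ s → x ∉ t) :
    ∀ x, p (q x) = q (p x) := by
  intro x
  by_cases hxs : x ∈ s
  · have hxt : x ∉ t := hst x hxs
    rw [hq x hxt]
    have hpxs : p x ∈ s := map_mem_of_out p hp hxs
    rw [hq _ (hst _ hpxs)]
  · by_cases hxt : x ∈ t
    · rw [hp x hxs]
      have hqxt : q x ∈ t := map_mem_of_out q hq hxt
      have hqs : q x ∉ s := fun h => (hst _ h) hqxt
      rw [hp _ hqs]
    · rw [hp x hxs, hq x hxt, hp x hxs]

/-- Support of a conjugate. -/
lemma conj_out (h p : Equiv.Perm ℝ) (hh : StrictMono ⇑h) {a b : ℝ}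
    (hp : ∀ x ∉ Icc a b, p x = x) :
    ∀ x ∉ Icc (h a) (h b), (h * p * h⁻¹) x = x := by
  intro x hx
  have hx' : h⁻¹ x ∉ Icc a b := by
    intro hmem
    apply hx
    constructor
    · have := hh.monotone hmem.1
      rwa [Equiv.Perm.apply_inv_self] at this
    · have := hh.monotone hmem.2
      rwa [Equiv.Perm.apply_inv_self] at this
  rw [Equiv.Perm.mul_apply, Equiv.Perm.mul_apply, hp _ hx', Equiv.Perm.apply_inv_self]

/-- Torsion-freeness device: the sequence of powers applied at a moved point is injective. -/
lemma pow_apply_injective {n : Equiv.Perm ℝ} (hsm : ∀ m : ℕ, StrictMono ⇑(n ^ m)) {x : ℝ}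
    (hx : n x ≠ x) : Function.Injective fun m : ℕ => (n ^ m) x := by
  have hstep : ∀ m : ℕ, (n ^ (m+1)) x = (n ^ m) (n x) := by
    intro m; rw [pow_succ]; exact Equiv.Perm.mul_apply _ _ _
  rcases lt_or_gt_of_ne hx with hlt | hgt
  · exact (strictAnti_nat_of_succ_lt fun m => by rw [hstep]; exact hsm m hlt).injective
  · exact (strictMono_nat_of_lt_succ fun m => by rw [hstep]; exact hsm m hgt).injective

/-- A strictly monotone permutation maps a LUB to the LUB of the image. -/
lemma isLUB_image_perm {p : Equiv.Perm ℝ} (hp : StrictMono ⇑p) {O : Set ℝ} {s : ℝ}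
    (h : IsLUB O s) : IsLUB (⇑p '' O) (p s) := by
  constructor
  · rintro _ ⟨y, hy, rfl⟩
    exact hp.monotone (h.1 hy)
  · intro z hz
    obtain ⟨w, rfl⟩ := p.surjective z
    have hsw : s ≤ w := h.2 (fun y hy => (hp.le_iff_le).1 (hz ⟨y, hy, rfl⟩))
    exact hp.monotone hsw

lemma conj_apply {G : Type*} [Group G] {Ω : Type*} (ρ : G →* Equiv.Perm Ω) (h m : G) (w : Ω) :
    ρ (h * m * h⁻¹) (ρ h w) = ρ h (ρ m w) := by
  simp [map_mul, map_inv, Equiv.Perm.mul_apply]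


lemma emb3 {Ω : Type u} [Infinite Ω] {k : ℕ} (hk : 3 ≤ k) (a b c : Ω)
    (hab : a ≠ b) (hac : a ≠ c) (hbc : b ≠ c) :
    ∃ x : Fin k ↪ Ω, x ⟨0, by omega⟩ = a ∧ x ⟨1, by omega⟩ = b ∧ x ⟨2, by omega⟩ = c := by
  classical
  have hfin : ({a, b, c} : Set Ω).Finite := (Set.finite_singleton c).insert b |>.insert a
  have hinf : ({a, b, c}ᶜ : Set Ω).Infinite := hfin.infinite_compl
  haveI := hinf.to_subtype
  let e : ℕ ↪ ({a, b, c}ᶜ : Set Ω) := Infinite.natEmbedding _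
  have ha' : ∀ m : ℕ, (↑(e m) : Ω) ≠ a ∧ (↑(e m) : Ω) ≠ b ∧ (↑(e m) : Ω) ≠ c := by
    intro m
    have hm := (e m).2
    simp only [Set.mem_compl_iff, Set.mem_insert_iff, Set.mem_singleton_iff] at hm
    push_neg at hm
    exact hm
  let F : Fin k → Ω := fun i =>
    if i.1 = 0 then a else if i.1 = 1 then b else if i.1 = 2 then c else (e i.1 : Ω)
  have hF : Function.Injective F := by
    intro i j hij
    simp only [F] at hij
    split_ifs at hij
    all_goals first
      | exact Fin.ext (by omega)
      | exact Fin.ext (e.injective (Subtype.ext hij))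
      | exact absurd hij hab
      | exact absurd hij.symm hab
      | exact absurd hij hac
      | exact absurd hij.symm hac
      | exact absurd hij hbc
      | exact absurd hij.symm hbc
      | exact absurd hij (ha' _).1
      | exact absurd hij.symm (ha' _).1
      | exact absurd hij (ha' _).2.1
      | exact absurd hij.symm (ha' _).2.1
      | exact absurd hij (ha' _).2.2
      | exact absurd hij.symm (ha' _).2.2
  refine ⟨⟨F, hF⟩, ?_, ?_, ?_⟩ <;> simp [F]


lemma trans3_of_k {Ω : Type u} [Infinite Ω] {G : Type*} [Group G] (ρ : G →* Equiv.Perm Ω)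
    {k : ℕ} (hk : 3 ≤ k) (ht : IsKTransitive ρ k) :
    ∀ a b c a' b' c' : Ω, a ≠ b → a ≠ c → b ≠ c → a' ≠ b' → a' ≠ c' → b' ≠ c' →
      ∃ g : G, ρ g a = a' ∧ ρ g b = b' ∧ ρ g c = c' := by
  intro a b c a' b' c' hab hac hbc hab' hac' hbc'
  obtain ⟨x, hx0, hx1, hx2⟩ := emb3 hk a b c hab hac hbc
  obtain ⟨y, hy0, hy1, hy2⟩ := emb3 hk a' b' c' hab' hac' hbc'
  obtain ⟨g, hg⟩ := ht x y
  refine ⟨g, ?_, ?_, ?_⟩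
  · rw [← hx0, ← hy0]; exact hg _
  · rw [← hx1, ← hy1]; exact hg _
  · rw [← hx2, ← hy2]; exact hg _

lemma trans2_of_trans3 {Ω : Type u} [Infinite Ω] {G : Type*} [Group G] (ρ : G →* Equiv.Perm Ω)
    (T3 : ∀ a b c a' b' c' : Ω, a ≠ b → a ≠ c → b ≠ c → a' ≠ b' → a' ≠ c' → b' ≠ c' →
      ∃ g : G, ρ g a = a' ∧ ρ g b = b' ∧ ρ g c = c') :
    ∀ a b a' b' : Ω, a ≠ b → a' ≠ b' → ∃ g : G, ρ g a = a' ∧ ρ g b = b' := by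
  classical
  intro a b a' b' h h'
  obtain ⟨c, hc⟩ := Infinite.exists_notMem_finset ({a, b, a', b'} : Finset Ω)
  simp only [Finset.mem_insert, Finset.mem_singleton, not_or] at hc
  obtain ⟨h1, h2, h3, h4⟩ := hc
  obtain ⟨g, hg1, hg2, _⟩ := T3 a b c a' b' c h (Ne.symm h1) (Ne.symm h2) h' (Ne.symm h3) (Ne.symm h4)
  exact ⟨g, hg1, hg2⟩


lemma isLUB_image_perm' {p : Equiv.Perm ℝ} (hp : StrictMono ⇑p) {O : Set ℝ} {s : ℝ}
    (h : IsLUB O s) : IsLUB (⇑p '' O) (p s) := by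
  constructor
  · rintro _ ⟨y, hy, rfl⟩
    exact hp.monotone (h.1 hy)
  · intro z hz
    obtain ⟨w, rfl⟩ := p.surjective z
    have hsw : s ≤ w := h.2 (fun y hy => (hp.le_iff_le).1 (hz ⟨y, hy, rfl⟩))
    exact hp.monotone hsw

/-- Key lemma: under the hypotheses, two-point stabilizers of a 3-transitive action
have orbits on ℝ which are unbounded above. -/
lemma pushers (G : Subgroup (Equiv.Perm ℝ))
    (hmono : ∀ g ∈ G, StrictMono (g : Equiv.Perm ℝ))
    (hnofix : ∀ x : ℝ, ∃ g ∈ G, (g : Equiv.Perm ℝ) x ≠ x)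
    {Ω : Type u} [Infinite Ω] (ρ : ↥G →* Equiv.Perm Ω)
    (T3 : ∀ a b c a' b' c' : Ω, a ≠ b → a ≠ c → b ≠ c → a' ≠ b' → a' ≠ c' → b' ≠ c' →
      ∃ g : ↥G, ρ g a = a' ∧ ρ g b = b' ∧ ρ g c = c')
    (T2 : ∀ a b a' b' : Ω, a ≠ b → a' ≠ b' → ∃ g : ↥G, ρ g a = a' ∧ ρ g b = b')
    (π₁ π₂ : Ω) (hπ : π₁ ≠ π₂) (x M : ℝ) :
    ∃ f : ↥G, ρ f π₁ = π₁ ∧ ρ f π₂ = π₂ ∧ M < (f : Equiv.Perm ℝ) x := by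
  classical
  by_contra hcon
  push_neg at hcon
  -- hcon : ∀ f, ρ f π₁ = π₁ → ρ f π₂ = π₂ → ↑f x ≤ M
  set O : Set ℝ := {y | ∃ r : ↥G, ρ r π₁ = π₁ ∧ ρ r π₂ = π₂ ∧ (r : Equiv.Perm ℝ) x = y} with hO
  have hxO : x ∈ O := ⟨1, by simp, by simp, by simp⟩
  have hbdd : BddAbove O := ⟨M, by rintro y ⟨r, h1, h2, rfl⟩; exact hcon r h1 h2⟩
  have hlub : IsLUB O (sSup O) := isLUB_csSup ⟨x, hxO⟩ hbdd
  set s := sSup O with hs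
  have hfixs : ∀ r : ↥G, ρ r π₁ = π₁ → ρ r π₂ = π₂ → (r : Equiv.Perm ℝ) s = s := by
    intro r h1 h2
    have himg : (⇑(r : Equiv.Perm ℝ)) '' O = O := by
      ext y
      constructor
      · rintro ⟨z, ⟨r', g1, g2, rfl⟩, rfl⟩
        refine ⟨r * r', ?_, ?_, ?_⟩
        · rw [map_mul, Equiv.Perm.mul_apply, g1, h1]
        · rw [map_mul, Equiv.Perm.mul_apply, g2, h2]
        · rw [Subgroup.coe_mul, Equiv.Perm.mul_apply]
      · rintro ⟨r', g1, g2, rfl⟩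
        refine ⟨((r⁻¹ * r' : ↥G) : Equiv.Perm ℝ) x, ⟨r⁻¹ * r', ?_, ?_, rfl⟩, ?_⟩
        · rw [map_mul, map_inv, Equiv.Perm.mul_apply, g1]
          conv_lhs => rw [← h1]
          exact Equiv.Perm.inv_apply_self _ _
        · rw [map_mul, map_inv, Equiv.Perm.mul_apply, g2]
          conv_lhs => rw [← h2]
          exact Equiv.Perm.inv_apply_self _ _
        · show ((r : Equiv.Perm ℝ)) (((r⁻¹ * r' : ↥G) : Equiv.Perm ℝ) x) = ((r' : Equiv.Perm ℝ)) x
          rw [Subgroup.coe_mul]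
          simp [Equiv.Perm.mul_apply, Equiv.Perm.apply_inv_self]
      
    have h3 : IsLUB O ((r : Equiv.Perm ℝ) s) := by
      have := isLUB_image_perm' (hmono _ r.2) hlub
      rwa [himg] at this
    exact (h3.unique hlub)
  have gsel : ∀ y z : Ω, y ≠ z → ∃ g : ↥G, ρ g π₁ = y ∧ ρ g π₂ = z :=
    fun y z h => T2 π₁ π₂ y z hπ h
  set T : Ω → Ω → ℝ := fun y z =>
    if h : y ≠ z then ((gsel y z h).choose : Equiv.Perm ℝ) s else 0 with hT
  have hTval : ∀ (y z : Ω) (h : y ≠ z), T y z = ((gsel y z h).choose : Equiv.Perm ℝ) s := by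
    intro y z h
    simp only [hT, dif_pos h]
  -- equivariance
  have heq : ∀ (g : ↥G) (y z : Ω), y ≠ z →
      T (ρ g y) (ρ g z) = (g : Equiv.Perm ℝ) (T y z) := by
    intro g y z h
    have h' : ρ g y ≠ ρ g z := fun hh => h ((ρ g).injective hh)
    set P := (gsel (ρ g y) (ρ g z) h').choose with hPdef
    set Q := g * (gsel y z h).choose with hQdef
    have hp1 : ρ P π₁ = ρ g y := (gsel (ρ g y) (ρ g z) h').choose_spec.1
    have hp2 : ρ P π₂ = ρ g z := (gsel (ρ g y) (ρ g z) h').choose_spec.2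
    have hq1 : ρ Q π₁ = ρ g y := by
      rw [hQdef, map_mul, Equiv.Perm.mul_apply, (gsel y z h).choose_spec.1]
    have hq2 : ρ Q π₂ = ρ g z := by
      rw [hQdef, map_mul, Equiv.Perm.mul_apply, (gsel y z h).choose_spec.2]
    have hr1 : ρ (Q⁻¹ * P) π₁ = π₁ := by
      rw [map_mul, map_inv, Equiv.Perm.mul_apply, hp1, ← hq1]
      exact Equiv.Perm.inv_apply_self _ _
    have hr2 : ρ (Q⁻¹ * P) π₂ = π₂ := by
      rw [map_mul, map_inv, Equiv.Perm.mul_apply, hp2, ← hq2]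
      exact Equiv.Perm.inv_apply_self _ _
    have hfx := hfixs (Q⁻¹ * P) hr1 hr2
    have hQP : Q * (Q⁻¹ * P) = P := by group
    have hPs : (P : Equiv.Perm ℝ) s = (Q : Equiv.Perm ℝ) s := by
      conv_lhs => rw [← hQP]
      rw [Subgroup.coe_mul, Equiv.Perm.mul_apply, hfx]
    rw [hTval _ _ h', hTval _ _ h, ← hPdef, hPs, hQdef, Subgroup.coe_mul, Equiv.Perm.mul_apply]
  -- swap invariance
  have hswap : ∀ y z : Ω, y ≠ z → T y z = T z y := by
    intro y z h
    obtain ⟨g, hg1, hg2⟩ := T2 y z z y h h.symm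
    have hm := hmono _ g.2
    have e1 := heq g y z h
    rw [hg1, hg2] at e1
    have e2 := heq g z y h.symm
    rw [hg1, hg2] at e2
    -- e1 : T z y = ↑g (T y z), e2 : T y z = ↑g (T z y)
    rcases lt_trichotomy (T y z) (T z y) with hlt | he | hgt
    · exfalso
      have := hm hlt
      rw [← e1, ← e2] at this
      exact absurd hlt (by linarith)
    · exact he
    · exfalso
      have := hm hgt
      rw [← e1, ← e2] at this
      exact absurd hgt (by linarith)
  -- cyclic invariance
  have hcyc : ∀ y z w : Ω, y ≠ z → z ≠ w → y ≠ w → T y z = T z w := by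
    intro y z w h1 h2 h3
    obtain ⟨g, hg1, hg2, hg3⟩ := T3 y z w z w y h1 h3 h2 h2 (Ne.symm h1) (Ne.symm h3)
    have hm := hmono _ g.2
    have e1 := heq g y z h1
    rw [hg1, hg2] at e1
    have e2 := heq g z w h2
    rw [hg2, hg3] at e2
    have e3 := heq g w y (Ne.symm h3)
    rw [hg3, hg1] at e3
    -- e1 : T z w = ↑g (T y z), e2 : T w y = ↑g (T z w), e3 : T y z = ↑g (T w y)
    rcases lt_trichotomy (T y z) (T z w) with hlt | he | hgt
    · exfalso
      have l2 := hm hlt; rw [← e1, ← e2] at l2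
      have l3 := hm l2; rw [← e2, ← e3] at l3
      linarith
    · exact he
    · exfalso
      have l2 := hm hgt; rw [← e1, ← e2] at l2
      have l3 := hm l2; rw [← e2, ← e3] at l3
      linarith
  -- T is constant
  have hconst : ∀ y z : Ω, y ≠ z → T y z = T π₁ π₂ := by
    intro y z hyz
    obtain ⟨w, hw⟩ := Infinite.exists_notMem_finset ({π₁, π₂, y, z} : Finset Ω)
    simp only [Finset.mem_insert, Finset.mem_singleton, not_or] at hw
    obtain ⟨hw1, hw2, hw3, hw4⟩ := hw
    have s1 : T π₁ π₂ = T π₂ w := hcyc π₁ π₂ w hπ (Ne.symm hw2) (Ne.symm hw1)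
    have s2 : T π₂ w = T w y := by
      by_cases hyp : y = π₂
      · rw [hyp]; exact hswap π₂ w (Ne.symm hw2)
      · exact hcyc π₂ w y (Ne.symm hw2) hw3 (fun hh => hyp hh.symm)
    have s3 : T w y = T y z := hcyc w y z hw3 hyz hw4
    rw [s1, s2, s3]
  -- finale: T π₁ π₂ is a global fixed point
  obtain ⟨g0, hg0G, hg0⟩ := hnofix (T π₁ π₂)
  set g : ↥G := ⟨g0, hg0G⟩ with hgdef
  have h' : ρ g π₁ ≠ ρ g π₂ := fun hh => hπ ((ρ g).injective hh)
  have e := heq g π₁ π₂ hπ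
  rw [hconst _ _ h'] at e
  exact hg0 e.symm

/-- **(Le Boudec--Matte Bon, Proposition 6.2.)** Let `G ≤ Homeo⁺(ℝ)` be a group of
orientation-preserving (strictly increasing) homeomorphisms of the real line, acting on `ℝ`
with no global fixed point, and containing a non-trivial element with compact support.
Then the transitivity degree of `G` is at most `2`: every faithful `k`-transitive action
of `G` on a set satisfies `k ≤ 2`. -/
theorem line_transitivity_degree_le_two
    (G : Subgroup (Equiv.Perm ℝ))
    (hmono : ∀ g ∈ G, StrictMono (g : Equiv.Perm ℝ))
    (hnofix : ∀ x : ℝ, ∃ g ∈ G, (g : Equiv.Perm ℝ) x ≠ x)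
    (hcompact : ∃ g ∈ G, g ≠ (1 : Equiv.Perm ℝ) ∧
      ∃ K : Set ℝ, IsCompact K ∧ ∀ x ∉ K, (g : Equiv.Perm ℝ) x = x) :
    ∀ (Ω : Type u) (ρ : G →* Equiv.Perm Ω) (k : ℕ),
      Function.Injective ρ → IsKTransitive ρ k → k ≤ 2 := by
  classical
  intro Ω ρ k hinj htrans
  by_contra hk2
  push_neg at hk2
  have hk : 3 ≤ k := hk2
  -- unpack the compactly supported element
  obtain ⟨n0, hn0G, hn0ne, K, hKcomp, hKfix⟩ := hcompact
  have hKne : K.Nonempty := by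
    rcases Set.eq_empty_or_nonempty K with he | hne
    · exfalso
      apply hn0ne
      ext z
      simp [hKfix z (by rw [he]; exact Set.notMem_empty z)]
    · exact hne
  set a : ℝ := sInf K with ha
  set b : ℝ := sSup K with hb
  have hout : ∀ x ∉ Icc a b, n0 x = x := by
    intro x hx
    refine hKfix x (fun hK => hx ⟨?_, ?_⟩)
    · exact csInf_le hKcomp.bddBelow hK
    · exact le_csSup hKcomp.bddAbove hK
  set nstar : ↥G := ⟨n0, hn0G⟩ with hnstar
  have hne1 : nstar ≠ 1 := by
    intro hh
    apply hn0ne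
    have := congrArg (Subtype.val) hh
    exact this
  have hnmoved : ∃ x : ℝ, (nstar : Equiv.Perm ℝ) x ≠ x := by
    by_contra hno
    push_neg at hno
    exact hn0ne (Equiv.ext hno)
  -- powers of elements of G are strictly monotone
  have hsm : ∀ (r : ↥G) (m : ℕ), StrictMono ⇑((r : Equiv.Perm ℝ) ^ m) := by
    intro r m
    have hmem : (r : Equiv.Perm ℝ) ^ m ∈ G := G.pow_mem r.2 m
    exact hmono _ hmem
  -- Ω is infinite
  have hΩ : Infinite Ω := by
    by_contra hno
    haveI : Finite Ω := not_infinite_iff_finite.mp hno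
    haveI : Finite (Equiv.Perm Ω) :=
      Finite.of_injective (fun e : Equiv.Perm Ω => (e : Ω → Ω))
        (fun e1 e2 hh => Equiv.coe_fn_injective hh)
    obtain ⟨i, j, hij, hij2⟩ := Finite.exists_ne_map_eq_of_infinite (fun m : ℕ => ρ nstar ^ m)
    have h1 : nstar ^ i = nstar ^ j := by
      apply hinj
      rw [map_pow, map_pow]
      exact hij2
    have h2 : ((nstar : Equiv.Perm ℝ)) ^ i = (nstar : Equiv.Perm ℝ) ^ j := by
      have := congrArg (Subtype.val) h1
      simpa using this
    obtain ⟨x0, hx0⟩ := hnmoved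
    exact hij (pow_apply_injective (hsm nstar) hx0 (show ((nstar : Equiv.Perm ℝ) ^ i) x0 = ((nstar : Equiv.Perm ℝ) ^ j) x0 by rw [h2]))
  haveI := hΩ
  have T3 := trans3_of_k ρ hk htrans
  have T2 := trans2_of_trans3 ρ T3
  by_cases hα : ∃ mm : ↥G, (∃ A B : ℝ, ∀ x ∉ Icc A B, (mm : Equiv.Perm ℝ) x = x) ∧
      mm ≠ 1 ∧ ∃ d : Ω, ρ mm d = d
  · -- Case α: some nontrivial compactly supported element has a fixed point in Ω
    obtain ⟨mm, ⟨A, B, hmout⟩, hmm1, d0, hd0⟩ := hα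
    have hρm : ρ mm ≠ 1 := by
      intro hh
      exact hmm1 (hinj (by rw [hh, map_one]))
    have hmoved : ∃ w : Ω, ρ mm w ≠ w := by
      by_contra hno
      push_neg at hno
      exact hρm (Equiv.ext hno)
    obtain ⟨α₀, hα₀⟩ := hmoved
    set β₀ := ρ mm α₀ with hβ₀
    have hαβ : α₀ ≠ β₀ := fun h => hα₀ h.symm
    have hdα : d0 ≠ α₀ := by
      intro h
      rw [h] at hd0
      exact hα₀ hd0
    have hdβ : d0 ≠ β₀ := by
      intro hdb
      apply hdα
      apply (ρ mm).injective
      rw [hd0, ← hβ₀]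
      exact hdb
    obtain ⟨h, hh1, hh2⟩ := T2 α₀ β₀ α₀ d0 hαβ (Ne.symm hdα)
    obtain ⟨f, hf1, hf2, hf3⟩ := pushers G hmono hnofix ρ T3 T2 α₀ d0 (Ne.symm hdα) A ((h : Equiv.Perm ℝ) B)
    set uu := h * mm * h⁻¹ with huu
    set gg := f * mm * f⁻¹ with hgg
    have hcu : ((uu : ↥G) : Equiv.Perm ℝ) = (h : Equiv.Perm ℝ) * mm * (h : Equiv.Perm ℝ)⁻¹ := by
      rw [huu]; rfl
    have hcg : ((gg : ↥G) : Equiv.Perm ℝ) = (f : Equiv.Perm ℝ) * mm * (f : Equiv.Perm ℝ)⁻¹ := by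
      rw [hgg]; rfl
    have hu_out : ∀ x ∉ Icc ((h : Equiv.Perm ℝ) A) ((h : Equiv.Perm ℝ) B),
        ((uu : ↥G) : Equiv.Perm ℝ) x = x := by
      intro x hx
      rw [hcu]
      exact conj_out _ _ (hmono _ h.2) hmout x hx
    have hg_out : ∀ x ∉ Icc ((f : Equiv.Perm ℝ) A) ((f : Equiv.Perm ℝ) B),
        ((gg : ↥G) : Equiv.Perm ℝ) x = x := by
      intro x hx
      rw [hcg]
      exact conj_out _ _ (hmono _ f.2) hmout x hx
    have hsep : ∀ x, x ∈ Icc ((h : Equiv.Perm ℝ) A) ((h : Equiv.Perm ℝ) B) →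
        x ∉ Icc ((f : Equiv.Perm ℝ) A) ((f : Equiv.Perm ℝ) B) := by
      intro x hx1 hx2
      have : x ≤ (h : Equiv.Perm ℝ) B := hx1.2
      have : (f : Equiv.Perm ℝ) A ≤ x := hx2.1
      linarith [hx1.2, hx2.1, hf3]
    have hcomm := commute_of_sep _ _ hu_out hg_out hsep
    have hcommG : uu * gg = gg * uu := by
      apply Subtype.ext
      rw [Subgroup.coe_mul, Subgroup.coe_mul]
      apply Equiv.ext
      intro x
      rw [Equiv.Perm.mul_apply, Equiv.Perm.mul_apply]
      exact hcomm x
    have huα : ρ uu α₀ = d0 := by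
      have hc := conj_apply ρ h mm α₀
      rw [hh1] at hc
      rw [huu, hc, ← hβ₀, hh2]
    have hgα : ρ gg α₀ = ρ f β₀ := by
      have hc := conj_apply ρ f mm α₀
      rw [hf1] at hc
      rw [hgg, hc, ← hβ₀]
    have hgd : ρ gg d0 = d0 := by
      have hc := conj_apply ρ f mm d0
      rw [hf2, hd0, hf2] at hc
      rw [hgg, hc]
    have hkey : ρ uu (ρ gg α₀) = ρ gg (ρ uu α₀) := by
      have hc := congrArg (fun z : ↥G => ρ z α₀) hcommG
      simpa [map_mul, Equiv.Perm.mul_apply] using hc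
    rw [huα, hgd, hgα] at hkey
    -- hkey : ρ uu (ρ f β₀) = d0
    have hfβ : ρ f β₀ = α₀ := by
      apply (ρ uu).injective
      rw [hkey, huα]
    apply hαβ
    apply (ρ f).injective
    rw [hfβ, hf1]
  · -- Case β: every compactly supported nontrivial element acts freely on Ω
    push_neg at hα
    -- hα : ∀ mm, (supp) → mm ≠ 1 → ∀ d, ρ mm d ≠ d
    have hρn : ρ nstar ≠ 1 := by
      intro hh
      exact hne1 (hinj (by rw [hh, map_one]))
    have hmoved : ∃ w : Ω, ρ nstar w ≠ w := by
      by_contra hno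
      push_neg at hno
      exact hρn (Equiv.ext hno)
    obtain ⟨α₀, hα₀⟩ := hmoved
    set β₀ := ρ nstar α₀ with hβ₀
    set γ₀ := ρ nstar β₀ with hγ₀
    have hβα : β₀ ≠ α₀ := hα₀
    have hγβ : γ₀ ≠ β₀ := hα nstar ⟨a, b, hout⟩ hne1 β₀
    have hγα : γ₀ ≠ α₀ := by
      intro hh
      have hsupp2 : ∃ A B : ℝ, ∀ x ∉ Icc A B, ((nstar * nstar : ↥G) : Equiv.Perm ℝ) x = x := by
        refine ⟨a, b, fun x hx => ?_⟩
        rw [Subgroup.coe_mul, Equiv.Perm.mul_apply, hout x hx, hout x hx]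
      have hfix2 : ρ (nstar * nstar) α₀ = α₀ := by
        rw [map_mul, Equiv.Perm.mul_apply, ← hβ₀, ← hγ₀, hh]
      have h2ne : nstar * nstar ≠ 1 := by
        intro h1
        have hco : ((nstar : Equiv.Perm ℝ)) * nstar = 1 := by
          have := congrArg (Subtype.val) h1
          simpa using this
        obtain ⟨x0, hx0⟩ := hnmoved
        have hpow : ((nstar : Equiv.Perm ℝ)) ^ 2 = (nstar : Equiv.Perm ℝ) ^ 0 := by
          rw [pow_two, hco, pow_zero]
        have h20 : (2 : ℕ) = 0 := pow_apply_injective (hsm nstar) hx0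
          (show ((nstar : Equiv.Perm ℝ) ^ 2) x0 = ((nstar : Equiv.Perm ℝ) ^ 0) x0 by rw [hpow])
        omega
      exact hα (nstar * nstar) hsupp2 h2ne α₀ hfix2
    obtain ⟨δ, hδ⟩ := Infinite.exists_notMem_finset ({α₀, β₀, γ₀} : Finset Ω)
    simp only [Finset.mem_insert, Finset.mem_singleton, not_or] at hδ
    obtain ⟨hδα, hδβ, hδγ⟩ := hδ
    obtain ⟨h, hh1, hh2, hh3⟩ := T3 α₀ β₀ γ₀ α₀ β₀ δ (Ne.symm hβα) (Ne.symm hγα) (Ne.symm hγβ)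
      (Ne.symm hβα) (Ne.symm hδα) (Ne.symm hδβ)
    set uu := h * nstar * h⁻¹ with huu
    have huα : ρ uu α₀ = β₀ := by
      have hc := conj_apply ρ h nstar α₀
      rw [hh1] at hc
      rw [huu, hc, ← hβ₀, hh2]
    have huβ : ρ uu β₀ = δ := by
      have hc := conj_apply ρ h nstar β₀
      rw [hh2] at hc
      rw [huu, hc, ← hγ₀, hh3]
    set w := uu⁻¹ * nstar with hw
    have hcu : ((uu : ↥G) : Equiv.Perm ℝ) = (h : Equiv.Perm ℝ) * nstar * (h : Equiv.Perm ℝ)⁻¹ := by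
      rw [huu]; rfl
    have hwsupp : ∃ A B : ℝ, ∀ x ∉ Icc A B, ((w : ↥G) : Equiv.Perm ℝ) x = x := by
      refine ⟨min a ((h : Equiv.Perm ℝ) a), max b ((h : Equiv.Perm ℝ) b), ?_⟩
      intro x hx
      have hx1 : x ∉ Icc a b := fun hmem =>
        hx ⟨le_trans (min_le_left _ _) hmem.1, le_trans hmem.2 (le_max_left _ _)⟩
      have hx2 : x ∉ Icc ((h : Equiv.Perm ℝ) a) ((h : Equiv.Perm ℝ) b) := fun hmem =>
        hx ⟨le_trans (min_le_right _ _) hmem.1, le_trans hmem.2 (le_max_right _ _)⟩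
      have h1 : (nstar : Equiv.Perm ℝ) x = x := hout x hx1
      have h2 : ((uu : ↥G) : Equiv.Perm ℝ) x = x := by
        rw [hcu]
        exact conj_out _ _ (hmono _ h.2) hout x hx2
      have h3 : ((uu : ↥G) : Equiv.Perm ℝ)⁻¹ x = x := by
        conv_lhs => rw [← h2]
        exact Equiv.Perm.inv_apply_self _ _
      rw [hw, Subgroup.coe_mul, Equiv.Perm.mul_apply, h1]
      exact h3
    have hwfix : ρ w α₀ = α₀ := by
      rw [hw, map_mul, map_inv, Equiv.Perm.mul_apply, ← hβ₀, ← huα]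
      exact Equiv.Perm.inv_apply_self _ _
    have hw1 : w = 1 := by
      by_contra hwne
      exact hα w hwsupp hwne α₀ hwfix
    have hnu : nstar = uu := by
      rw [hw] at hw1
      exact (inv_mul_eq_one.mp hw1).symm
    apply hδγ
    rw [hγ₀, hnu, huβ]
end
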